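/- arXiv:1912.01575 — 3 statements merged into one kernel-verified Lean document; each statement's English description precedes it below -/
import Mathlib

section
/- For any d ≥ 2, any τ > d − 1 and any ω̃ ∈ Ω^{d−1}_τ, Lebesgue-almost every ω_d ∈ ℝ satisfies (ω̃, ω_d) ∈ Ω^d_τ; that is, the set of ω_d ∈ ℝ for which (ω̃, ω_d) ∉ Ω^d_τ has Lebesgue measure zero. -/
open Real Filter Set

noncomputable section

lemma aux_one_le_norm {m : ℕ} {k : Fin m → ℤ} (hk : k ≠ 0) : 1 ≤ ‖k‖ := by
  obtain ⟨i, hi⟩ := Function.ne_iff.mp hk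
  calc (1:ℝ) ≤ ‖k i‖ := by
        rw [Int.norm_eq_abs]
        exact_mod_cast Int.one_le_abs hi
    _ ≤ ‖k‖ := norm_le_pi_norm k i

lemma aux_coord_le {m : ℕ} (k : Fin m → ℤ) (i : Fin m) : |(k i : ℝ)| ≤ ‖k‖ := by
  have := norm_le_pi_norm k i
  rwa [Int.norm_eq_abs] at this

lemma aux_mem_ball (S b r x : ℝ) (hb : b ≠ 0) :
    |S + x * b| < r ↔ x ∈ Metric.ball (-S / b) (r / |b|) := by
  rw [Metric.mem_ball, Real.dist_eq, lt_div_iff₀ (abs_pos.mpr hb), ← abs_mul]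
  rw [show (x - -S / b) * b = S + x * b by field_simp; ring]

lemma aux_tsum_pi_prod (U : ℤ → ENNReal) :
    ∀ n : ℕ, ∑' k : Fin n → ℤ, ∏ i, U (k i) = (∑' m : ℤ, U m) ^ n := by
  intro n
  induction n with
  | zero =>
      rw [pow_zero]
      rw [tsum_eq_single (fun _ => 0) (fun b hb => absurd (Subsingleton.elim b _) hb)]
      simp
  | succ n ih =>
      rw [← (Fin.consEquiv fun _ : Fin (n+1) => ℤ).tsum_eq]
      have : ∀ p : ℤ × (Fin n → ℤ),
          ∏ i, U (((Fin.consEquiv fun _ : Fin (n+1) => ℤ) p) i) = U p.1 * ∏ i, U (p.2 i) := by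
        intro p
        rw [Fin.prod_univ_succ]
        simp [Fin.consEquiv]
      rw [tsum_congr this, ENNReal.tsum_prod']
      simp_rw [ENNReal.tsum_mul_left, ENNReal.tsum_mul_right]
      rw [ih, pow_succ, mul_comm]

lemma aux_summable_max_rpow {s : ℝ} (hs : 1 < s) :
    Summable fun m : ℤ => (max |(m : ℝ)| 1) ^ (-s) := by
  have h0 : Summable fun m : ℤ => |(m : ℝ)| ^ (-s) := Real.summable_abs_int_rpow hs
  have h1 : Summable fun m : ℤ => if m = 0 then (1:ℝ) else 0 :=
    summable_of_ne_finset_zero (s := {0}) (by intro b hb; simp at hb; simp [hb])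
  refine Summable.of_nonneg_of_le (fun m => Real.rpow_nonneg (le_trans zero_le_one (le_max_right _ _)) _)
    (fun m => ?_) (h0.add h1)
  by_cases hm : m = 0
  · simp [hm, Real.zero_rpow (by linarith : -s ≠ 0)]
  · have h1m : (1:ℝ) ≤ |(m:ℝ)| := by exact_mod_cast Int.one_le_abs hm
    have : (max |(m:ℝ)| 1) ^ (-s) ≤ |(m:ℝ)| ^ (-s) := by
      rw [max_eq_left h1m]
    simpa [hm] using this

lemma aux_key_ineq {e : ℕ} {τ ε s : ℝ} (hε : 0 < ε) (hs : 0 < s)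
    (hτe : τ = ε + s * e) (K : Fin (e + 1) → ℤ) (hb : K (Fin.last e) ≠ 0) :
    1 / (‖K‖ ^ τ * |(K (Fin.last e) : ℝ)|) ≤
      |(K (Fin.last e) : ℝ)| ^ (-(1 + ε)) *
        ∏ i : Fin e, (max |(K (Fin.castSucc i) : ℝ)| 1) ^ (-s) := by
  set b : ℝ := |(K (Fin.last e) : ℝ)| with hbdef
  have hb1 : (1:ℝ) ≤ b := by
    rw [hbdef, ← Int.cast_abs]
    exact_mod_cast Int.one_le_abs hb
  have hbK : b ≤ ‖K‖ := aux_coord_le K (Fin.last e)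
  have hK1 : (1:ℝ) ≤ ‖K‖ := le_trans hb1 hbK
  have hKpos : (0:ℝ) < ‖K‖ := lt_of_lt_of_le zero_lt_one hK1
  have hbpos : (0:ℝ) < b := lt_of_lt_of_le zero_lt_one hb1
  have hprodpos : (0:ℝ) < ∏ i : Fin e, (max |(K (Fin.castSucc i) : ℝ)| 1) ^ s := by
    apply Finset.prod_pos
    intro i _
    exact Real.rpow_pos_of_pos (lt_of_lt_of_le zero_lt_one (le_max_right _ _)) _
  have key : b ^ (1 + ε) * ∏ i : Fin e, (max |(K (Fin.castSucc i) : ℝ)| 1) ^ s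
      ≤ ‖K‖ ^ τ * b := by
    have h1 : ∏ i : Fin e, (max |(K (Fin.castSucc i) : ℝ)| 1) ^ s ≤ ‖K‖ ^ (s * e) := by
      have : ‖K‖ ^ (s * (e:ℝ)) = ∏ _i : Fin e, ‖K‖ ^ s := by
        rw [Finset.prod_const, ← Real.rpow_natCast (‖K‖ ^ s), ← Real.rpow_mul hKpos.le]
        simp [Finset.card_univ]
      rw [this]
      apply Finset.prod_le_prod
      · intro i _; positivity
      · intro i _
        apply Real.rpow_le_rpow (le_trans zero_le_one (le_max_right _ _)) _ hs.le
        exact max_le (aux_coord_le K _) hK1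
    have h2 : b ^ ε ≤ ‖K‖ ^ ε := Real.rpow_le_rpow hbpos.le hbK hε.le
    calc b ^ (1 + ε) * ∏ i : Fin e, (max |(K (Fin.castSucc i) : ℝ)| 1) ^ s
        = (b ^ ε * ∏ i : Fin e, (max |(K (Fin.castSucc i) : ℝ)| 1) ^ s) * b := by
          rw [Real.rpow_add hbpos, Real.rpow_one]; ring
      _ ≤ (‖K‖ ^ ε * ‖K‖ ^ (s * e)) * b := by
          apply mul_le_mul_of_nonneg_right _ hbpos.le
          exact mul_le_mul h2 h1 hprodpos.le (Real.rpow_nonneg hKpos.le _)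
      _ = ‖K‖ ^ τ * b := by rw [← Real.rpow_add hKpos, ← hτe]
  calc 1 / (‖K‖ ^ τ * b)
      ≤ 1 / (b ^ (1 + ε) * ∏ i : Fin e, (max |(K (Fin.castSucc i) : ℝ)| 1) ^ s) :=
        one_div_le_one_div_of_le (by positivity) key
    _ = b ^ (-(1 + ε)) * ∏ i : Fin e, (max |(K (Fin.castSucc i) : ℝ)| 1) ^ (-s) := by
        rw [one_div, mul_inv, ← Real.rpow_neg hbpos.le]
        congr 1
        rw [← Finset.prod_inv_distrib]
        exact Finset.prod_congr rfl fun i _ =>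
          (Real.rpow_neg (le_trans zero_le_one (le_max_right _ _)) _).symm

def auxSnocEquiv (n : ℕ) : ((Fin n → ℤ) × ℤ) ≃ (Fin (n + 1) → ℤ) where
  toFun p := Fin.snoc p.1 p.2
  invFun K := (fun i => K (Fin.castSucc i), K (Fin.last n))
  left_inv p := by
    refine Prod.ext ?_ ?_
    · funext i; simp
    · simp
  right_inv K := Fin.snoc_init_self K

/-- `ω ∈ Ω^m_τ`: `ω` is Diophantine with exponent `τ` (for some constant `γ > 0`),
i.e. `|⟨ω, k⟩| ≥ γ/‖k‖^τ` for all nonzero integer vectors `k`. -/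
def DiophVec {m : ℕ} (τ : ℝ) (ω : Fin m → ℝ) : Prop :=
  ∃ γ : ℝ, 0 < γ ∧ ∀ k : Fin m → ℤ, k ≠ 0 → γ / ‖k‖ ^ τ ≤ |∑ i, ω i * (k i : ℝ)|

/-- For any `d ≥ 2`, any `τ > d − 1` and any `ω̃ ∈ Ω^{d−1}_τ`,
Lebesgue-almost every `ω_d ∈ ℝ` satisfies `(ω̃, ω_d) ∈ Ω^d_τ`: the set of `ω_d`
for which `(ω̃, ω_d) ∉ Ω^d_τ` has Lebesgue measure zero. -/
theorem statement2 (d : ℕ) (hd : 2 ≤ d) (τ : ℝ) (hτ : (d : ℝ) - 1 < τ)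
    (ω : Fin (d - 1) → ℝ) (hω : DiophVec τ ω) :
    MeasureTheory.volume
      {x : ℝ | ¬ DiophVec τ (fun i : Fin d =>
        if h : (i : ℕ) < d - 1 then ω ⟨i, h⟩ else x)} = 0 := by
  obtain ⟨e, rfl⟩ : ∃ e, d = e + 1 := ⟨d - 1, by omega⟩
  have he : 1 ≤ e := by omega
  have heτ : (e : ℝ) < τ := by push_cast at hτ; linarith
  have hepos : (0:ℝ) < e := by exact_mod_cast he
  obtain ⟨γ₀, hγ₀, hDio⟩ := hω
  set ε : ℝ := (τ - e) / 2 with hεdef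
  have hε : 0 < ε := by rw [hεdef]; linarith
  set s : ℝ := (τ - ε) / e with hsdef
  have hs1 : 1 < s := by
    rw [hsdef, lt_div_iff₀ hepos, hεdef]
    linarith
  have hs0 : 0 < s := zero_lt_one.trans hs1
  have hτeq : τ = ε + s * e := by
    have : s * e = τ - ε := by
      rw [hsdef]
      field_simp
    linarith
  -- the summable weights
  set U : ℤ → ENNReal := fun m => ENNReal.ofReal ((max |(m:ℝ)| 1) ^ (-s)) with hU
  set V : ℤ → ENNReal := fun b => ENNReal.ofReal (|(b:ℝ)| ^ (-(1+ε))) with hV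
  set M : ENNReal := (∑' b : ℤ, V b) * (∑' m : ℤ, U m) ^ e with hM
  have hVfin : ∑' b : ℤ, V b ≠ ⊤ := by
    rw [hV, ← ENNReal.ofReal_tsum_of_nonneg (fun b => Real.rpow_nonneg (abs_nonneg _) _)
      (Real.summable_abs_int_rpow (by linarith))]
    exact ENNReal.ofReal_ne_top
  have hUfin : ∑' m : ℤ, U m ≠ ⊤ := by
    rw [hU, ← ENNReal.ofReal_tsum_of_nonneg
      (fun m => Real.rpow_nonneg (le_trans zero_le_one (le_max_right _ _)) _)
      (aux_summable_max_rpow hs1)]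
    exact ENNReal.ofReal_ne_top
  have hMfin : M ≠ ⊤ := ENNReal.mul_ne_top hVfin (ENNReal.pow_ne_top hUfin)
  -- rewriting the inner sums
  have hsum : ∀ (x : ℝ) (K : Fin (e+1) → ℤ),
      ∑ i : Fin (e+1), (if h : (i:ℕ) < e + 1 - 1 then ω ⟨i, h⟩ else x) * (K i : ℝ)
        = (∑ i : Fin e, ω i * (K (Fin.castSucc i) : ℝ)) + x * (K (Fin.last e) : ℝ) := by
    intro x K
    rw [Fin.sum_univ_castSucc]
    congr 1
    · refine Finset.sum_congr rfl fun i _ => ?_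
      rw [dif_pos (show ((Fin.castSucc i : Fin (e+1)) : ℕ) < e + 1 - 1 by simpa using i.isLt)]
      rfl
    · rw [dif_neg (by simp only [Fin.val_last]; omega)]
  -- the main bound for each γ
  have main : ∀ γ : ℝ, 0 < γ → γ ≤ γ₀ →
      MeasureTheory.volume {x : ℝ | ¬ DiophVec τ (fun i : Fin (e+1) =>
        if h : (i : ℕ) < e + 1 - 1 then ω ⟨i, h⟩ else x)}
      ≤ ENNReal.ofReal (2 * γ) * M := by
    intro γ hγpos hγle
    set A : (Fin (e+1) → ℤ) → Set ℝ := fun K =>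
      if K (Fin.last e) = 0 then ∅ else
        Metric.ball (-(∑ i : Fin e, ω i * (K (Fin.castSucc i) : ℝ)) / (K (Fin.last e) : ℝ))
          (γ / ‖K‖ ^ τ / |(K (Fin.last e) : ℝ)|) with hA
    have hsub : {x : ℝ | ¬ DiophVec τ (fun i : Fin (e+1) =>
        if h : (i : ℕ) < e + 1 - 1 then ω ⟨i, h⟩ else x)} ⊆ ⋃ K, A K := by
      intro x hx
      rw [mem_setOf_eq, DiophVec] at hx
      push_neg at hx
      obtain ⟨K, hK0, hKlt⟩ := hx γ hγpos
      beta_reduce at hKlt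
      rw [hsum x K] at hKlt
      by_cases h0 : K (Fin.last e) = 0
      · exfalso
        set kt : Fin e → ℤ := fun i => K (Fin.castSucc i) with hkt
        have hkt0 : kt ≠ 0 := by
          obtain ⟨j, hj⟩ := Function.ne_iff.mp hK0
          have hje : (j : ℕ) < e := by
            rcases lt_or_eq_of_le (Nat.lt_succ_iff.mp j.isLt) with h | h
            · exact h
            · exfalso; apply hj; rw [show j = Fin.last e from Fin.ext h]; exact h0
          refine Function.ne_iff.mpr ⟨⟨(j : ℕ), hje⟩, ?_⟩
          simpa [hkt, show Fin.castSucc ⟨(j : ℕ), hje⟩ = j from Fin.ext rfl] using hj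
        have hnle : ‖kt‖ ≤ ‖K‖ := by
          refine (pi_norm_le_iff_of_nonneg (norm_nonneg K)).mpr fun i => ?_
          exact norm_le_pi_norm K (Fin.castSucc i)
        have hpow : ‖kt‖ ^ τ ≤ ‖K‖ ^ τ := Real.rpow_le_rpow (norm_nonneg _) hnle
          (by linarith)
        have hktpos : (0:ℝ) < ‖kt‖ ^ τ :=
          Real.rpow_pos_of_pos (lt_of_lt_of_le zero_lt_one (aux_one_le_norm hkt0)) _
        have hDk := hDio kt hkt0
        have : γ / ‖K‖ ^ τ ≤ γ₀ / ‖kt‖ ^ τ := div_le_div₀ hγ₀.le hγle hktpos hpow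
        rw [h0] at hKlt
        simp only [Int.cast_zero, mul_zero, add_zero] at hKlt
        have heq : ∑ i, ω i * (kt i : ℝ) = ∑ i : Fin e, ω i * (K (Fin.castSucc i) : ℝ) := rfl
        rw [heq] at hDk
        linarith
      · refine mem_iUnion.mpr ⟨K, ?_⟩
        rw [hA]
        simp only [if_neg h0]
        exact (aux_mem_ball _ _ _ x (by exact_mod_cast h0)).mp hKlt
    have hball : ∀ K : Fin (e+1) → ℤ, MeasureTheory.volume (A K) ≤
        ENNReal.ofReal (2 * γ) * (V (K (Fin.last e)) * ∏ i : Fin e, U (K (Fin.castSucc i))) := by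
      intro K
      by_cases h0 : K (Fin.last e) = 0
      · rw [hA]; simp [h0]
      · rw [hA]
        simp only [if_neg h0]
        rw [Real.volume_ball]
        have hkey := aux_key_ineq hε hs0 hτeq K h0
        have h2 : 2 * (γ / ‖K‖ ^ τ / |(K (Fin.last e) : ℝ)|)
            = (2 * γ) * (1 / (‖K‖ ^ τ * |(K (Fin.last e) : ℝ)|)) := by
          ring
        rw [h2, ENNReal.ofReal_mul (by positivity)]
        refine mul_le_mul_right ?_ _
        calc ENNReal.ofReal (1 / (‖K‖ ^ τ * |(K (Fin.last e) : ℝ)|))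
            ≤ ENNReal.ofReal (|(K (Fin.last e) : ℝ)| ^ (-(1+ε)) *
                ∏ i : Fin e, (max |(K (Fin.castSucc i) : ℝ)| 1) ^ (-s)) :=
              ENNReal.ofReal_le_ofReal hkey
          _ = V (K (Fin.last e)) * ∏ i : Fin e, U (K (Fin.castSucc i)) := by
              rw [ENNReal.ofReal_mul (Real.rpow_nonneg (abs_nonneg _) _), hV, hU]
              congr 1
              exact ENNReal.ofReal_prod_of_nonneg fun i _ =>
                Real.rpow_nonneg (le_trans zero_le_one (le_max_right _ _)) _
    have hsplit : ∑' K : Fin (e+1) → ℤ,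
        (V (K (Fin.last e)) * ∏ i : Fin e, U (K (Fin.castSucc i))) = M := by
      rw [← (auxSnocEquiv e).tsum_eq]
      have : ∀ p : (Fin e → ℤ) × ℤ,
          V ((auxSnocEquiv e p) (Fin.last e)) * ∏ i : Fin e, U ((auxSnocEquiv e p) (Fin.castSucc i))
            = (∏ i : Fin e, U (p.1 i)) * V p.2 := by
        intro p
        change V (Fin.snoc (α := fun _ => ℤ) p.1 p.2 (Fin.last e)) * ∏ i : Fin e, U (Fin.snoc (α := fun _ => ℤ) p.1 p.2 (Fin.castSucc i)) = _
        simp only [auxSnocEquiv, Equiv.coe_fn_mk, Fin.snoc_castSucc, Fin.snoc_last]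
        rw [mul_comm]
      rw [tsum_congr this, ENNReal.tsum_prod']
      simp_rw [ENNReal.tsum_mul_left]
      rw [ENNReal.tsum_mul_right, aux_tsum_pi_prod U e, hM, mul_comm]
    calc MeasureTheory.volume {x : ℝ | ¬ DiophVec τ (fun i : Fin (e+1) =>
          if h : (i : ℕ) < e + 1 - 1 then ω ⟨i, h⟩ else x)}
        ≤ MeasureTheory.volume (⋃ K, A K) := MeasureTheory.measure_mono hsub
      _ ≤ ∑' K : Fin (e+1) → ℤ, MeasureTheory.volume (A K) := MeasureTheory.measure_iUnion_le _
      _ ≤ ∑' K : Fin (e+1) → ℤ, ENNReal.ofReal (2 * γ) *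
            (V (K (Fin.last e)) * ∏ i : Fin e, U (K (Fin.castSucc i))) :=
          ENNReal.tsum_le_tsum hball
      _ = ENNReal.ofReal (2 * γ) * M := by rw [ENNReal.tsum_mul_left, hsplit]
  -- conclude: the measure is ≤ every positive ε
  set Mr : ℝ := M.toReal with hMr
  refine le_antisymm ?_ zero_le
  refine ENNReal.le_of_forall_pos_le_add fun δ hδ _ => ?_
  rw [zero_add]
  have hδR : (0:ℝ) < δ := hδ
  set γ := min γ₀ ((δ:ℝ) / (2 * (Mr + 1))) with hγdef
  have hMrpos : (0:ℝ) < Mr + 1 := by positivity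
  have hγpos : 0 < γ := lt_min hγ₀ (by positivity)
  refine (main γ hγpos (min_le_left _ _)).trans ?_
  have hMle : M = ENNReal.ofReal Mr := (ENNReal.ofReal_toReal hMfin).symm
  have harith : 2 * γ * Mr ≤ (δ:ℝ) := by
    have h1 : γ ≤ (δ:ℝ) / (2 * (Mr + 1)) := min_le_right _ _
    rw [le_div_iff₀ (by positivity)] at h1
    have hMr0 : 0 ≤ Mr := ENNReal.toReal_nonneg
    nlinarith
  calc ENNReal.ofReal (2 * γ) * M = ENNReal.ofReal (2 * γ) * ENNReal.ofReal Mr := by rw [← hMle]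
    _ = ENNReal.ofReal (2 * γ * Mr) := (ENNReal.ofReal_mul (by positivity)).symm
    _ ≤ ENNReal.ofReal (δ:ℝ) := ENNReal.ofReal_le_ofReal harith
    _ = (δ : ENNReal) := ENNReal.ofReal_coe_nnreal
end
end

section
/- For any d ≥ 3 and any ω = (ω_1, …, ω_d) ∈ ℝ^d there exist a sequence of reals s_j with s_j → 0 and a sequence k_j ∈ ℤ^{d−1}∖{0} with ‖k_j‖ → ∞ such that Σ_{i=1}^{d−1} (ω_i + s_j^i) k_{j,i} = 0 for every j (i.e. ⟨ω̄̃(s_j), k_j⟩ = 0, where ω̄̃(s) = (ω_1 + s, ω_2 + s², …, ω_{d−1} + s^{d−1})). -/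
open Real Filter Set

noncomputable section

lemma key_lemma (A B δ : ℝ) (hδ : 0 < δ) :
    ∃ (s : ℝ) (r : ℚ), 0 < s ∧ s < δ ∧ B + s ^ 2 ≠ 0 ∧ A + s = (B + s ^ 2) * r := by
  -- find ε > 0 on which B + s^2 ≠ 0 for 0 < s < ε
  obtain ⟨ε, hε, hne⟩ : ∃ ε > 0, ∀ s : ℝ, 0 < s → s < ε → B + s ^ 2 ≠ 0 := by
    by_cases hB : B < 0
    · refine ⟨Real.sqrt (-B), Real.sqrt_pos.2 (by linarith), fun s hs hs' => ?_⟩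
      have h1 : s ^ 2 < -B := by
        have h2 : Real.sqrt (-B) ^ 2 = -B := Real.sq_sqrt (by linarith)
        nlinarith
      intro h; linarith
    · refine ⟨1, one_pos, fun s hs _ => ?_⟩
      push_neg at hB
      positivity
  set η := min δ ε with hηdef
  have hη : 0 < η := lt_min hδ hε
  set a := η / 4 with ha
  set b := η / 2 with hb
  set c := 3 * η / 4 with hc
  have hab : a < b := by rw [ha, hb]; linarith
  have hbc : b < c := by rw [hb, hc]; linarith
  have hapos : 0 < a := by rw [ha]; linarith
  have hcη : c < η := by rw [hc]; linarith
  have hden : ∀ s : ℝ, a ≤ s → s ≤ c → B + s ^ 2 ≠ 0 := fun s h1 h2 =>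
    hne s (lt_of_lt_of_le hapos h1) (lt_of_le_of_lt h2 (hcη.trans_le (min_le_right _ _)))
  set f : ℝ → ℝ := fun s => (A + s) / (B + s ^ 2) with hf
  have hcont : ContinuousOn f (Icc a c) := by
    apply ContinuousOn.div
    · fun_prop
    · fun_prop
    · intro s hs; exact hden s hs.1 hs.2
  -- nonconstancy: ¬ (f a = f b ∧ f a = f c)
  have hnc : ¬ (f a = f b ∧ f a = f c) := by
    rintro ⟨h1, h2⟩
    rw [hf, div_eq_div_iff (hden a le_rfl (by linarith)) (hden b hab.le hbc.le)] at h1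
    rw [div_eq_div_iff (hden a le_rfl (by linarith)) (hden c (by linarith) le_rfl)] at h2
    have e1 : A * (a + b) - B + a * b = 0 := by
      have : (b - a) * (A * (a + b) - B + a * b) = 0 := by linear_combination h1
      rcases mul_eq_zero.1 this with h | h
      · exfalso; linarith
      · exact h
    have e2 : A * (a + c) - B + a * c = 0 := by
      have : (c - a) * (A * (a + c) - B + a * c) = 0 := by linear_combination h2
      rcases mul_eq_zero.1 this with h | h
      · exfalso; linarith
      · exact h
    have e3 : A + a = 0 := by
      have : (c - b) * (A + a) = 0 := by linear_combination e2 - e1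
      rcases mul_eq_zero.1 this with h | h
      · exfalso; linarith
      · exact h
    have e4 : B + a ^ 2 = 0 := by nlinarith [e1, e3]
    exact hden a le_rfl (by linarith) e4
  -- extract a pair x < y in [a,c] with f x ≠ f y
  obtain ⟨x, y, hxy, hx, hy, hfxy⟩ :
      ∃ x y : ℝ, x < y ∧ a ≤ x ∧ y ≤ c ∧ f x ≠ f y := by
    by_cases h : f a = f b
    · exact ⟨a, c, by linarith, le_rfl, le_rfl, fun hc' => hnc ⟨h, hc'⟩⟩
    · exact ⟨a, b, hab, le_rfl, hbc.le, h⟩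
  have hcont' : ContinuousOn f (Icc x y) :=
    hcont.mono (Icc_subset_Icc hx hy)
  have hget : ∃ (s : ℝ) (r : ℚ), s ∈ Icc x y ∧ f s = (r : ℝ) := by
    rcases lt_or_gt_of_ne hfxy with h | h
    · obtain ⟨r, hr1, hr2⟩ := exists_rat_btwn h
      obtain ⟨s, hs, hfs⟩ := intermediate_value_Icc hxy.le hcont' ⟨hr1.le, hr2.le⟩
      exact ⟨s, r, hs, hfs⟩
    · obtain ⟨r, hr1, hr2⟩ := exists_rat_btwn h
      obtain ⟨s, hs, hfs⟩ := intermediate_value_Icc' hxy.le hcont' ⟨hr1.le, hr2.le⟩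
      exact ⟨s, r, hs, hfs⟩
  obtain ⟨s, r, ⟨hs1, hs2⟩, hfs⟩ := hget
  have hspos : 0 < s := lt_of_lt_of_le hapos (hx.trans hs1)
  have hsδ : s < δ := lt_of_le_of_lt (hs2.trans hy) (hcη.trans_le (min_le_left _ _))
  have hdens : B + s ^ 2 ≠ 0 := hden s (hx.trans hs1) (hs2.trans hy)
  refine ⟨s, r, hspos, hsδ, hdens, ?_⟩
  rw [hf] at hfs
  field_simp at hfs
  linarith [hfs]

/-- For any `d ≥ 3` and any `ω ∈ ℝ^d` there exist a sequence of
reals `s_j → 0` and a sequence `k_j ∈ ℤ^{d−1} ∖ {0}` with `‖k_j‖ → ∞` such that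
`⟨ω̄̃(s_j), k_j⟩ = Σ_{i=1}^{d−1} (ω_i + s_j^i) k_{j,i} = 0` for every `j`. -/
theorem statement9 (d : ℕ) (hd : 3 ≤ d) (ω : Fin d → ℝ) :
    ∃ (s : ℕ → ℝ) (k : ℕ → Fin (d - 1) → ℤ),
      Tendsto s atTop (nhds 0) ∧
      (∀ j, k j ≠ 0) ∧
      Tendsto (fun j => ‖k j‖) atTop atTop ∧
      ∀ j, ∑ i : Fin (d - 1),
        (ω (Fin.castLE (Nat.sub_le d 1) i) + s j ^ ((i : ℕ) + 1)) * (k j i : ℝ) = 0 := by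
  have hn : 2 ≤ d - 1 := by omega
  set i0 : Fin (d - 1) := ⟨0, by omega⟩ with hi0
  set i1 : Fin (d - 1) := ⟨1, by omega⟩ with hi1
  set A : ℝ := ω (Fin.castLE (Nat.sub_le d 1) i0) with hA
  set B : ℝ := ω (Fin.castLE (Nat.sub_le d 1) i1) with hB
  have H : ∀ j : ℕ, ∃ (s : ℝ) (r : ℚ),
      0 < s ∧ s < 1 / (j + 1) ∧ B + s ^ 2 ≠ 0 ∧ A + s = (B + s ^ 2) * r :=
    fun j => key_lemma A B (1 / (j + 1)) (by positivity)
  choose s r hs0 hs1 hden heq using H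
  refine ⟨s, fun j i => if i = i0 then ((j : ℤ) + 1) * (r j).den
      else if i = i1 then -(((j : ℤ) + 1) * (r j).num) else 0, ?_, ?_, ?_, ?_⟩
  · -- s → 0
    refine tendsto_of_tendsto_of_tendsto_of_le_of_le tendsto_const_nhds
      tendsto_one_div_add_atTop_nhds_zero_nat (fun j => (hs0 j).le) (fun j => (hs1 j).le)
  · -- k j ≠ 0
    intro j hk
    have := congrFun hk i0
    simp only [Pi.zero_apply, if_pos rfl, if_true, eq_self_iff_true] at this
    have hd0 : 0 < ((r j).den : ℤ) := Int.natCast_pos.2 (r j).den_pos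
    nlinarith [this, hd0]
  · -- norm → ∞
    have hle : ∀ j : ℕ, (j : ℝ) + 1 ≤ ‖(fun i => if i = i0 then ((j : ℤ) + 1) * (r j).den
        else if i = i1 then -(((j : ℤ) + 1) * (r j).num) else 0 : Fin (d-1) → ℤ)‖ := by
      intro j
      have h1 : ‖(((j : ℤ) + 1) * (r j).den : ℤ)‖ ≤ ‖(fun i => if i = i0 then ((j : ℤ) + 1) * (r j).den
          else if i = i1 then -(((j : ℤ) + 1) * (r j).num) else 0 : Fin (d-1) → ℤ)‖ := by
        have := norm_le_pi_norm (fun i => if i = i0 then ((j : ℤ) + 1) * (r j).den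
          else if i = i1 then -(((j : ℤ) + 1) * (r j).num) else 0 : Fin (d-1) → ℤ) i0
        simpa using this
      refine le_trans ?_ h1
      rw [Int.norm_eq_abs]
      have hd1 : (1 : ℤ) ≤ (r j).den := Int.ofNat_le.2 (r j).den_pos
      have : ((j : ℤ) + 1) ≤ ((j : ℤ) + 1) * (r j).den := le_mul_of_one_le_right (by positivity) hd1
      have habs : ((j : ℤ) + 1) ≤ |((j : ℤ) + 1) * (r j).den| := this.trans (le_abs_self _)
      rw [← Int.cast_abs]
      exact_mod_cast habs
    exact tendsto_atTop_mono hle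
      (tendsto_atTop_add_const_right _ 1 tendsto_natCast_atTop_atTop)
  · -- the sum is zero
    intro j
    rw [Finset.sum_eq_add_of_mem i0 i1 (Finset.mem_univ _) (Finset.mem_univ _)
      (by simp [hi0, hi1, Fin.ext_iff]) ?_]
    · have hnd : ((r j : ℝ)) * (r j).den = (r j).num := by
        rw [Rat.cast_def]
        field_simp
      have h0 : ((i0 : ℕ)) = 0 := rfl
      have h1 : ((i1 : ℕ)) = 1 := rfl
      simp only [if_pos rfl, if_neg (by simp [hi0, hi1, Fin.ext_iff] : ¬ i1 = i0), if_pos rfl,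
        h0, h1, hA.symm, hB.symm]
      push_cast
      have hthis := heq j
      linear_combination (((j:ℝ)+1) * ((r j).den : ℝ)) * hthis + (((j:ℝ)+1) * (B + s j ^ 2)) * hnd
    · intro c hc hcc
      simp only [if_neg hcc.1, if_neg hcc.2, Int.cast_zero, mul_zero]
end
end

section
/- Let d ≥ 3, ω̃ ∈ ℝ^{d−1}, and let k_j ∈ ℤ^{d−1}∖{0} (j ≥ 2) and positive reals u_j satisfy ‖k_j‖ ≥ j, u_j → ∞ and |⟨ω̃, k_j⟩| ≤ e^{−u_j ‖k_j‖} for all j. For (θ, r) ∈ ℂ^d × ℂ^d set f_j(θ, r) = ⟨ω̃, k_j⟩ · r_d^j · e^{‖k_j‖ r_d} · sin(2π⟨k_j, θ̃⟩), where θ̃ = (θ_1, …, θ_{d−1}) and sin and exp are the complex sine and exponential. Then the series Σ_{j≥2} f_j converges uniformly on every set {(θ, r) ∈ ℂ^d × ℂ^d : |Im θ_i| ≤ ρ and |r_i| ≤ Δ for all i} with Δ, ρ > 0; in particular its sum is an entire function on ℂ^d × ℂ^d, real-valued on ℝ^d × ℝ^d and ℤ^d-periodic in θ. -/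
open Real Filter Set

noncomputable section

/-- The term `f_j(θ, r) = ⟨ω̃, k_j⟩ r_d^j e^{‖k_j‖ r_d} sin(2π⟨k_j, θ̃⟩)` on `ℂ^d × ℂ^d`. -/
def fTermL (d : ℕ) (hd : 0 < d) (ωt : Fin (d - 1) → ℝ) (k : ℕ → Fin (d - 1) → ℤ) (j : ℕ)
    (z : (Fin d → ℂ) × (Fin d → ℂ)) : ℂ :=
  ((∑ i, ωt i * (k j i : ℝ) : ℝ) : ℂ) *
    z.2 ⟨d - 1, Nat.sub_lt hd Nat.one_pos⟩ ^ j *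
    Complex.exp ((‖k j‖ : ℂ) * z.2 ⟨d - 1, Nat.sub_lt hd Nat.one_pos⟩) *
    Complex.sin (((2 * π : ℝ) : ℂ) * ∑ i, (k j i : ℂ) * z.1 (Fin.castLE (Nat.sub_le d 1) i))


lemma aux_summable (u K : ℕ → ℝ) (hK1 : ∀ j, 1 ≤ K j) (hKj : ∀ j : ℕ, (j : ℝ) ≤ K j)
    (hu : Tendsto u atTop atTop) (a b c : ℝ) (ha : 0 ≤ a) (hc : 0 ≤ c) :
    Summable fun j => Real.exp (-(u j * K j)) * a ^ j * Real.exp (K j * b) * (c * K j) := by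
  set M := max a 1 with hM
  have hM1 : (1 : ℝ) ≤ M := le_max_right _ _
  have hM0 : (0 : ℝ) < M := lt_of_lt_of_le one_pos hM1
  have hlogM : 0 ≤ Real.log M := Real.log_nonneg hM1
  have hgeo : Summable (fun j : ℕ => c * Real.exp (-1 : ℝ) ^ j) :=
    (summable_geometric_of_lt_one (Real.exp_pos _).le
      (by rw [Real.exp_lt_one_iff]; norm_num)).mul_left c
  apply summable_of_isBigO_nat hgeo
  rw [Asymptotics.isBigO_iff]
  refine ⟨1, ?_⟩
  filter_upwards [hu.eventually_ge_atTop (b + Real.log M + 2)] with j hj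
  have hK0 : (0 : ℝ) ≤ K j := le_trans zero_le_one (hK1 j)
  have hterm_nonneg : 0 ≤ Real.exp (-(u j * K j)) * a ^ j * Real.exp (K j * b) * (c * K j) := by
    positivity
  rw [one_mul, Real.norm_of_nonneg hterm_nonneg, Real.norm_of_nonneg (by positivity)]
  have e1 : a ^ j ≤ Real.exp ((j : ℝ) * Real.log M) := by
    calc a ^ j ≤ M ^ j := pow_le_pow_left₀ ha (le_max_left _ _) j
      _ = Real.exp ((j : ℝ) * Real.log M) := by
          rw [Real.exp_nat_mul, Real.exp_log hM0]
  calc Real.exp (-(u j * K j)) * a ^ j * Real.exp (K j * b) * (c * K j)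
      ≤ Real.exp (-(u j * K j)) * Real.exp ((j : ℝ) * Real.log M) * Real.exp (K j * b)
          * (c * K j) := by gcongr
    _ = c * (K j * Real.exp ((j : ℝ) * Real.log M + K j * b - u j * K j)) := by
        rw [← Real.exp_add, ← Real.exp_add,
          show -(u j * K j) + (j : ℝ) * Real.log M + K j * b
            = (j : ℝ) * Real.log M + K j * b - u j * K j from by ring]
        ring
    _ ≤ c * (Real.exp (K j) * Real.exp ((j : ℝ) * Real.log M + K j * b - u j * K j)) := by
        gcongr
        linarith [Real.add_one_le_exp (K j)]
    _ = c * Real.exp (K j + ((j : ℝ) * Real.log M + K j * b - u j * K j)) := by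
        rw [← Real.exp_add]
    _ ≤ c * Real.exp (-(j : ℝ)) := by
        gcongr
        have h1 : ((j : ℝ)) * Real.log M ≤ K j * Real.log M :=
          mul_le_mul_of_nonneg_right (hKj j) hlogM
        have h2 : (b + Real.log M + 2) * K j ≤ u j * K j :=
          mul_le_mul_of_nonneg_right hj hK0
        linarith [hKj j]
    _ = c * Real.exp (-1 : ℝ) ^ j := by
        rw [← Real.exp_nat_mul]
        congr 1
        push_cast
        ring


def Wmap (d : ℕ) (hd : 0 < d) : ((Fin d → ℂ) × (Fin d → ℂ)) →L[ℂ] ℂ :=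
  (ContinuousLinearMap.proj ⟨d - 1, Nat.sub_lt hd Nat.one_pos⟩).comp
    (ContinuousLinearMap.snd ℂ (Fin d → ℂ) (Fin d → ℂ))

def Lmap (d : ℕ) (k : ℕ → Fin (d - 1) → ℤ) (j : ℕ) : ((Fin d → ℂ) × (Fin d → ℂ)) →L[ℂ] ℂ :=
  ∑ i, (k j i : ℂ) • (ContinuousLinearMap.proj (Fin.castLE (Nat.sub_le d 1) i)).comp
    (ContinuousLinearMap.fst ℂ (Fin d → ℂ) (Fin d → ℂ))

lemma Wmap_apply (d : ℕ) (hd : 0 < d) (z : (Fin d → ℂ) × (Fin d → ℂ)) :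
    Wmap d hd z = z.2 ⟨d - 1, Nat.sub_lt hd Nat.one_pos⟩ := rfl

lemma Lmap_apply (d : ℕ) (k : ℕ → Fin (d - 1) → ℤ) (j : ℕ) (z : (Fin d → ℂ) × (Fin d → ℂ)) :
    Lmap d k j z = ∑ i, (k j i : ℂ) * z.1 (Fin.castLE (Nat.sub_le d 1) i) := by
  simp [Lmap, ContinuousLinearMap.sum_apply]

lemma fTermL_eq (d : ℕ) (hd : 0 < d) (ωt : Fin (d - 1) → ℝ) (k : ℕ → Fin (d - 1) → ℤ) (j : ℕ) :
    fTermL d hd ωt k j = fun z =>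
      ((∑ i, ωt i * (k j i : ℝ) : ℝ) : ℂ) * (Wmap d hd z) ^ j *
        Complex.exp ((‖k j‖ : ℂ) * Wmap d hd z) *
        Complex.sin (((2 * π : ℝ) : ℂ) * Lmap d k j z) := by
  funext z
  rw [fTermL, Lmap_apply, Wmap_apply]

/-- derivative of the term -/
def dTerm (d : ℕ) (hd : 0 < d) (ωt : Fin (d - 1) → ℝ) (k : ℕ → Fin (d - 1) → ℤ) (j : ℕ)
    (z : (Fin d → ℂ) × (Fin d → ℂ)) : ((Fin d → ℂ) × (Fin d → ℂ)) →L[ℂ] ℂ :=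
  (((∑ i, ωt i * (k j i : ℝ) : ℝ) : ℂ) * (Wmap d hd z) ^ j *
      Complex.exp ((‖k j‖ : ℂ) * Wmap d hd z)) •
    ((Complex.cos (((2 * π : ℝ) : ℂ) * Lmap d k j z) * ((2 * π : ℝ) : ℂ)) • Lmap d k j) +
  Complex.sin (((2 * π : ℝ) : ℂ) * Lmap d k j z) •
    ((((∑ i, ωt i * (k j i : ℝ) : ℝ) : ℂ) * ((j : ℂ) * (Wmap d hd z) ^ (j - 1)) *
        Complex.exp ((‖k j‖ : ℂ) * Wmap d hd z) +
      ((∑ i, ωt i * (k j i : ℝ) : ℝ) : ℂ) * (Wmap d hd z) ^ j *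
        (Complex.exp ((‖k j‖ : ℂ) * Wmap d hd z) * (‖k j‖ : ℂ))) • Wmap d hd)

lemma fTermL_hasFDerivAt (d : ℕ) (hd : 0 < d) (ωt : Fin (d - 1) → ℝ)
    (k : ℕ → Fin (d - 1) → ℤ) (j : ℕ) (z : (Fin d → ℂ) × (Fin d → ℂ)) :
    HasFDerivAt (fTermL d hd ωt k j) (dTerm d hd ωt k j z) z := by
  set C : ℂ := ((∑ i, ωt i * (k j i : ℝ) : ℝ) : ℂ)
  set Kc : ℂ := ((‖k j‖ : ℝ) : ℂ)
  set B : ℂ := ((2 * π : ℝ) : ℂ)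
  have hW : HasFDerivAt (Wmap d hd) (Wmap d hd) z := (Wmap d hd).hasFDerivAt
  have hL : HasFDerivAt (Lmap d k j) (Lmap d k j) z := (Lmap d k j).hasFDerivAt
  have hg : HasDerivAt (fun w : ℂ => C * w ^ j * Complex.exp (Kc * w))
      (C * ((j : ℂ) * (Wmap d hd z) ^ (j - 1)) * Complex.exp (Kc * Wmap d hd z) +
        C * (Wmap d hd z) ^ j * (Complex.exp (Kc * Wmap d hd z) * Kc)) (Wmap d hd z) := by
    have h1 : HasDerivAt (fun w : ℂ => C * w ^ j)
        (C * ((j : ℂ) * (Wmap d hd z) ^ (j - 1))) (Wmap d hd z) :=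
      (hasDerivAt_pow j _).const_mul C
    have h2 : HasDerivAt (fun w : ℂ => Complex.exp (Kc * w))
        (Complex.exp (Kc * Wmap d hd z) * Kc) (Wmap d hd z) := by
      simpa [Function.comp_def] using (Complex.hasDerivAt_exp (Kc * Wmap d hd z)).comp (Wmap d hd z)
        ((hasDerivAt_id (Wmap d hd z)).const_mul Kc)
    exact h1.mul h2
  have hs : HasDerivAt (fun v : ℂ => Complex.sin (B * v))
      (Complex.cos (B * Lmap d k j z) * B) (Lmap d k j z) := by
    simpa [Function.comp_def] using (Complex.hasDerivAt_sin (B * Lmap d k j z)).comp (Lmap d k j z)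
      ((hasDerivAt_id (Lmap d k j z)).const_mul B)
  have hgf := hg.comp_hasFDerivAt z hW
  have hsf := hs.comp_hasFDerivAt z hL
  have := hgf.mul hsf
  rw [fTermL_eq d hd ωt k j]
  exact this

lemma norm_Wmap_le (d : ℕ) (hd : 0 < d) : ‖Wmap d hd‖ ≤ 1 := by
  apply ContinuousLinearMap.opNorm_le_bound _ zero_le_one
  intro z
  rw [one_mul, Wmap_apply]
  exact le_trans (norm_le_pi_norm z.2 _) (norm_snd_le z)

lemma abs_k_le (d : ℕ) (k : ℕ → Fin (d - 1) → ℤ) (j : ℕ) (i : Fin (d - 1)) :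
    |(k j i : ℝ)| ≤ ‖k j‖ := by
  have := norm_le_pi_norm (k j) i
  rwa [Int.norm_eq_abs] at this

lemma one_le_normk (d : ℕ) (k : ℕ → Fin (d - 1) → ℤ) (j : ℕ) (h : k j ≠ 0) :
    1 ≤ ‖k j‖ := by
  obtain ⟨i, hi⟩ := Function.ne_iff.mp h
  refine le_trans ?_ (abs_k_le d k j i)
  have h1 : (1 : ℤ) ≤ |k j i| := Int.one_le_abs (by simpa using hi)
  have h2 : ((1 : ℤ) : ℝ) ≤ ((|k j i| : ℤ) : ℝ) := Int.cast_le.mpr h1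
  rwa [Int.cast_one, Int.cast_abs] at h2

lemma norm_Lmap_le (d : ℕ) (k : ℕ → Fin (d - 1) → ℤ) (j : ℕ) :
    ‖Lmap d k j‖ ≤ ((d - 1 : ℕ) : ℝ) * ‖k j‖ := by
  apply ContinuousLinearMap.opNorm_le_bound _ (by positivity)
  intro z
  rw [Lmap_apply]
  calc ‖∑ i, (k j i : ℂ) * z.1 (Fin.castLE (Nat.sub_le d 1) i)‖
      ≤ ∑ i, ‖(k j i : ℂ) * z.1 (Fin.castLE (Nat.sub_le d 1) i)‖ := norm_sum_le _ _
    _ ≤ ∑ _i : Fin (d - 1), ‖k j‖ * ‖z‖ := by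
        apply Finset.sum_le_sum
        intro i _
        rw [norm_mul]
        have h1 : ‖((k j i : ℤ) : ℂ)‖ ≤ ‖k j‖ := by
          rw [Complex.norm_intCast]
          exact_mod_cast (by push_cast; exact abs_k_le d k j i : |((k j i : ℤ) : ℝ)| ≤ ‖k j‖)
        have h2 : ‖z.1 (Fin.castLE (Nat.sub_le d 1) i)‖ ≤ ‖z‖ :=
          le_trans (norm_le_pi_norm z.1 _) (norm_fst_le z)
        exact mul_le_mul h1 h2 (norm_nonneg _) (le_trans (norm_nonneg _) h1)
    _ = ((d - 1 : ℕ) : ℝ) * ‖k j‖ * ‖z‖ := by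
        rw [Finset.sum_const, Finset.card_univ, Fintype.card_fin, nsmul_eq_mul]; ring

lemma im_arg_bound (d : ℕ) (k : ℕ → Fin (d - 1) → ℤ) (j : ℕ) (ρ : ℝ)
    (z : (Fin d → ℂ) × (Fin d → ℂ)) (hθ : ∀ i, |(z.1 i).im| ≤ ρ) :
    |(((2 * π : ℝ) : ℂ) * ∑ i, (k j i : ℂ) * z.1 (Fin.castLE (Nat.sub_le d 1) i)).im|
      ≤ 2 * π * (((d - 1 : ℕ) : ℝ) * (‖k j‖ * ρ)) := by
  have him : (((2 * π : ℝ) : ℂ) * ∑ i, (k j i : ℂ) * z.1 (Fin.castLE (Nat.sub_le d 1) i)).im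
      = 2 * π * (∑ i, (k j i : ℂ) * z.1 (Fin.castLE (Nat.sub_le d 1) i)).im := by
    simp [Complex.mul_im]
  rw [him, abs_mul, abs_of_pos (by positivity : (0:ℝ) < 2 * π)]
  gcongr 2 * π * ?_
  calc |(∑ i, (k j i : ℂ) * z.1 (Fin.castLE (Nat.sub_le d 1) i)).im|
      = |∑ i, (k j i : ℝ) * (z.1 (Fin.castLE (Nat.sub_le d 1) i)).im| := by
        rw [Complex.im_sum]
        congr 1
        apply Finset.sum_congr rfl
        intro i _
        simp [Complex.mul_im]
    _ ≤ ∑ i, |(k j i : ℝ) * (z.1 (Fin.castLE (Nat.sub_le d 1) i)).im| :=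
        Finset.abs_sum_le_sum_abs _ _
    _ ≤ ∑ _i : Fin (d - 1), ‖k j‖ * ρ := by
        apply Finset.sum_le_sum
        intro i _
        rw [abs_mul]
        exact mul_le_mul (abs_k_le d k j i) (hθ _) (abs_nonneg _)
          (le_trans (abs_nonneg _) (abs_k_le d k j i))
    _ = ((d - 1 : ℕ) : ℝ) * (‖k j‖ * ρ) := by
        rw [Finset.sum_const, Finset.card_univ, Fintype.card_fin, nsmul_eq_mul]

lemma norm_sin_le_exp' (z : ℂ) : ‖Complex.sin z‖ ≤ Real.exp |z.im| := by
  have h1 : ‖Complex.exp (-z * Complex.I)‖ = Real.exp z.im := by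
    rw [Complex.norm_exp]; congr 1; simp [Complex.mul_I_re]
  have h2 : ‖Complex.exp (z * Complex.I)‖ = Real.exp (-z.im) := by
    rw [Complex.norm_exp]; congr 1; simp [Complex.mul_I_re]
  rw [Complex.sin]
  calc ‖(Complex.exp (-z * Complex.I) - Complex.exp (z * Complex.I)) * Complex.I / 2‖
      = ‖Complex.exp (-z * Complex.I) - Complex.exp (z * Complex.I)‖ / 2 := by
        simp [map_div₀, map_mul, Complex.norm_I]
    _ ≤ (Real.exp z.im + Real.exp (-z.im)) / 2 := by
        rw [← h1, ← h2]; gcongr; exact norm_sub_le _ _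
    _ ≤ Real.exp |z.im| := by
        have := Real.exp_le_exp.2 (le_abs_self z.im)
        have := Real.exp_le_exp.2 (neg_le_abs z.im)
        linarith

lemma norm_cos_le_exp' (z : ℂ) : ‖Complex.cos z‖ ≤ Real.exp |z.im| := by
  have h1 : ‖Complex.exp (-z * Complex.I)‖ = Real.exp z.im := by
    rw [Complex.norm_exp]; congr 1; simp [Complex.mul_I_re]
  have h2 : ‖Complex.exp (z * Complex.I)‖ = Real.exp (-z.im) := by
    rw [Complex.norm_exp]; congr 1; simp [Complex.mul_I_re]
  rw [Complex.cos]
  calc ‖(Complex.exp (z * Complex.I) + Complex.exp (-z * Complex.I)) / 2‖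
      = ‖Complex.exp (z * Complex.I) + Complex.exp (-z * Complex.I)‖ / 2 := by
        simp [map_div₀]
    _ ≤ (Real.exp (-z.im) + Real.exp z.im) / 2 := by
        rw [← h1, ← h2]; gcongr; exact norm_add_le _ _
    _ ≤ Real.exp |z.im| := by
        have := Real.exp_le_exp.2 (le_abs_self z.im)
        have := Real.exp_le_exp.2 (neg_le_abs z.im)
        linarith

lemma norm_exp_K_le (d : ℕ) (hd : 0 < d) (K Δ : ℝ) (hK : 0 ≤ K)
    (z : (Fin d → ℂ) × (Fin d → ℂ)) (hr : ∀ i, ‖z.2 i‖ ≤ Δ) :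
    ‖Complex.exp ((K : ℂ) * z.2 ⟨d - 1, Nat.sub_lt hd Nat.one_pos⟩)‖ ≤ Real.exp (K * Δ) := by
  rw [Complex.norm_exp]
  apply Real.exp_le_exp.2
  have h1 : ((K : ℂ) * z.2 ⟨d - 1, Nat.sub_lt hd Nat.one_pos⟩).re
      = K * (z.2 ⟨d - 1, Nat.sub_lt hd Nat.one_pos⟩).re := by
    simp [Complex.mul_re]
  rw [h1]
  have h2 : (z.2 ⟨d - 1, Nat.sub_lt hd Nat.one_pos⟩).re ≤ Δ :=
    le_trans (le_trans (le_abs_self _) (Complex.abs_re_le_norm _)) (hr _)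
  exact mul_le_mul_of_nonneg_left h2 hK

lemma fTermL_norm_le (d : ℕ) (hd : 0 < d) (ωt : Fin (d - 1) → ℝ) (k : ℕ → Fin (d - 1) → ℤ)
    (u : ℕ → ℝ) (hsmall : ∀ j, |∑ i, ωt i * (k j i : ℝ)| ≤ Real.exp (-(u j * ‖k j‖)))
    (Δ ρ : ℝ) (j : ℕ) (z : (Fin d → ℂ) × (Fin d → ℂ))
    (hθ : ∀ i, |(z.1 i).im| ≤ ρ) (hr : ∀ i, ‖z.2 i‖ ≤ Δ) :
    ‖fTermL d hd ωt k j z‖ ≤ Real.exp (-(u j * ‖k j‖)) * Δ ^ j * Real.exp (‖k j‖ * Δ)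
      * Real.exp (2 * π * (((d - 1 : ℕ) : ℝ) * (‖k j‖ * ρ))) := by
  have hΔ : 0 ≤ Δ := le_trans (norm_nonneg _) (hr ⟨d - 1, Nat.sub_lt hd Nat.one_pos⟩)
  rw [fTermL, norm_mul, norm_mul, norm_mul]
  have b1 : ‖(((∑ i, ωt i * (k j i : ℝ)) : ℝ) : ℂ)‖ ≤ Real.exp (-(u j * ‖k j‖)) := by
    rw [Complex.norm_real]; exact hsmall j
  have b2 : ‖z.2 ⟨d - 1, Nat.sub_lt hd Nat.one_pos⟩ ^ j‖ ≤ Δ ^ j := by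
    rw [norm_pow]; exact pow_le_pow_left₀ (norm_nonneg _) (hr _) j
  have b3 : ‖Complex.exp ((‖k j‖ : ℂ) * z.2 ⟨d - 1, Nat.sub_lt hd Nat.one_pos⟩)‖
      ≤ Real.exp (‖k j‖ * Δ) := norm_exp_K_le d hd _ Δ (norm_nonneg _) z hr
  have b4 : ‖Complex.sin (((2 * π : ℝ) : ℂ) *
      ∑ i, (k j i : ℂ) * z.1 (Fin.castLE (Nat.sub_le d 1) i))‖
      ≤ Real.exp (2 * π * (((d - 1 : ℕ) : ℝ) * (‖k j‖ * ρ))) :=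
    le_trans (norm_sin_le_exp' _) (Real.exp_le_exp.2 (im_arg_bound d k j ρ z hθ))
  gcongr

lemma dTerm_norm_le (d : ℕ) (hd : 0 < d) (ωt : Fin (d - 1) → ℝ) (k : ℕ → Fin (d - 1) → ℤ)
    (u : ℕ → ℝ) (hsmall : ∀ j, |∑ i, ωt i * (k j i : ℝ)| ≤ Real.exp (-(u j * ‖k j‖)))
    (hkj : ∀ j : ℕ, (j : ℝ) ≤ ‖k j‖)
    (R : ℝ) (hR : 1 ≤ R) (j : ℕ) (z : (Fin d → ℂ) × (Fin d → ℂ))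
    (hθ : ∀ i, |(z.1 i).im| ≤ R) (hr : ∀ i, ‖z.2 i‖ ≤ R) :
    ‖dTerm d hd ωt k j z‖ ≤ Real.exp (-(u j * ‖k j‖)) * R ^ j
      * Real.exp (‖k j‖ * (R + 2 * π * ((d - 1 : ℕ) : ℝ) * R)) * ((2 * π * d + 2) * ‖k j‖) := by
  set K : ℝ := ‖k j‖ with hK
  set e : Fin d := ⟨d - 1, Nat.sub_lt hd Nat.one_pos⟩ with he
  set c0 : ℝ := Real.exp (-(u j * K)) with hc0
  set X : ℝ := Real.exp (2 * π * (((d - 1 : ℕ) : ℝ) * (K * R))) with hX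
  set eKR : ℝ := Real.exp (K * R) with heKR
  have hK0 : 0 ≤ K := norm_nonneg _
  have hR0 : (0:ℝ) ≤ R := le_trans zero_le_one hR
  -- bounds on the pieces
  have hw : ‖Wmap d hd z‖ ≤ R := by rw [Wmap_apply]; exact hr _
  have hC : ‖(((∑ i, ωt i * (k j i : ℝ)) : ℝ) : ℂ)‖ ≤ c0 := by
    rw [Complex.norm_real]; exact hsmall j
  have hE : ‖Complex.exp ((K : ℂ) * Wmap d hd z)‖ ≤ eKR := by
    rw [Wmap_apply]; exact norm_exp_K_le d hd K R hK0 z hr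
  have hSin : ‖Complex.sin (((2 * π : ℝ) : ℂ) * Lmap d k j z)‖ ≤ X := by
    rw [Lmap_apply]
    exact le_trans (norm_sin_le_exp' _) (Real.exp_le_exp.2 (im_arg_bound d k j R z hθ))
  have hCos : ‖Complex.cos (((2 * π : ℝ) : ℂ) * Lmap d k j z)‖ ≤ X := by
    rw [Lmap_apply]
    exact le_trans (norm_cos_le_exp' _) (Real.exp_le_exp.2 (im_arg_bound d k j R z hθ))
  have hWn : ‖Wmap d hd‖ ≤ 1 := norm_Wmap_le d hd
  have hLn : ‖Lmap d k j‖ ≤ ((d - 1 : ℕ) : ℝ) * K := norm_Lmap_le d k j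
  have hpow : ‖Wmap d hd z‖ ^ j ≤ R ^ j := pow_le_pow_left₀ (norm_nonneg _) hw j
  have hpow' : ‖Wmap d hd z‖ ^ (j - 1) ≤ R ^ j :=
    le_trans (pow_le_pow_left₀ (norm_nonneg _) hw _) (pow_le_pow_right₀ hR (Nat.sub_le j 1))
  -- assemble
  rw [dTerm]
  set CA : ℂ := ((∑ i, ωt i * (k j i : ℝ) : ℝ) : ℂ) with hCA
  set wv : ℂ := Wmap d hd z with hwv
  set Ev : ℂ := Complex.exp ((K : ℂ) * wv) with hEv
  set Sv : ℂ := Complex.sin (((2 * π : ℝ) : ℂ) * Lmap d k j z) with hSv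
  set Cv : ℂ := Complex.cos (((2 * π : ℝ) : ℂ) * Lmap d k j z) with hCv
  have hKc : ‖(K : ℂ)‖ ≤ K := by
    rw [Complex.norm_real, Real.norm_eq_abs, abs_of_nonneg hK0]
  have hBc : ‖((2 * π : ℝ) : ℂ)‖ ≤ 2 * π := by
    rw [Complex.norm_real, Real.norm_eq_abs, abs_of_pos (by positivity : (0:ℝ) < 2 * π)]
  have hjc : ‖((j : ℕ) : ℂ)‖ ≤ (j : ℝ) := by rw [Complex.norm_natCast]
  have main : ‖(CA * wv ^ j * Ev) • ((Cv * ((2 * π : ℝ) : ℂ)) • Lmap d k j) +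
      Sv • ((CA * ((j : ℂ) * wv ^ (j - 1)) * Ev + CA * wv ^ j * (Ev * (K : ℂ))) • Wmap d hd)‖
      ≤ (c0 * R ^ j * eKR) * ((X * (2 * π)) * (((d - 1 : ℕ) : ℝ) * K))
        + X * ((c0 * ((j : ℝ) * R ^ j) * eKR + c0 * R ^ j * (eKR * K)) * 1) := by
    refine le_trans (norm_add_le _ _) ?_
    rw [norm_smul (CA * wv ^ j * Ev) ((Cv * ((2 * π : ℝ) : ℂ)) • Lmap d k j),
      norm_smul (Cv * ((2 * π : ℝ) : ℂ)) (Lmap d k j),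
      norm_smul Sv ((CA * ((j : ℂ) * wv ^ (j - 1)) * Ev + CA * wv ^ j * (Ev * (K : ℂ))) • Wmap d hd),
      norm_smul (CA * ((j : ℂ) * wv ^ (j - 1)) * Ev + CA * wv ^ j * (Ev * (K : ℂ))) (Wmap d hd)]
    gcongr
    · rw [norm_mul, norm_mul, norm_pow]
      gcongr
    · rw [norm_mul]
      gcongr
    · refine le_trans (norm_add_le _ _) ?_
      gcongr
      · rw [norm_mul, norm_mul, norm_mul, norm_pow]
        gcongr
      · rw [norm_mul, norm_mul, norm_mul, norm_pow]
        gcongr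
  refine le_trans main ?_
  have key : 2 * π * (((d - 1 : ℕ) : ℝ) * K) + ((j : ℝ) + K) ≤ (2 * π * d + 2) * K := by
    have hdm : ((d - 1 : ℕ) : ℝ) ≤ (d : ℝ) := by exact_mod_cast Nat.sub_le d 1
    have t1 : ((d - 1 : ℕ) : ℝ) * (2 * π * K) ≤ (d : ℝ) * (2 * π * K) :=
      mul_le_mul_of_nonneg_right hdm (by positivity)
    have t2 : (j : ℝ) ≤ K := hkj j
    nlinarith [t1, t2, hK0]
  calc (c0 * R ^ j * eKR) * ((X * (2 * π)) * (((d - 1 : ℕ) : ℝ) * K))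
        + X * ((c0 * ((j : ℝ) * R ^ j) * eKR + c0 * R ^ j * (eKR * K)) * 1)
      = (c0 * R ^ j * eKR * X) * (2 * π * (((d - 1 : ℕ) : ℝ) * K) + ((j : ℝ) + K)) := by ring
    _ ≤ (c0 * R ^ j * eKR * X) * ((2 * π * d + 2) * K) := by
        apply mul_le_mul_of_nonneg_left key (by positivity)
    _ = c0 * R ^ j * Real.exp (K * (R + 2 * π * ((d - 1 : ℕ) : ℝ) * R)) * ((2 * π * d + 2) * K) := by
        rw [show K * (R + 2 * π * ((d - 1 : ℕ) : ℝ) * R)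
            = K * R + 2 * π * (((d - 1 : ℕ) : ℝ) * (K * R)) from by ring, Real.exp_add]
        ring


/-- Let `d ≥ 3`, `ω̃ ∈ ℝ^{d−1}`, and let `k_j ∈ ℤ^{d−1} ∖ {0}` and
`u_j > 0` satisfy `‖k_j‖ ≥ j`, `u_j → ∞` and `|⟨ω̃, k_j⟩| ≤ e^{−u_j‖k_j‖}`. The
series `Σ_{j≥2} ⟨ω̃, k_j⟩ r_d^j e^{‖k_j‖ r_d} sin(2π⟨k_j, θ̃⟩)` converges uniformly
on every set `{|Im θ_i| ≤ ρ, |r_i| ≤ Δ}` with `Δ, ρ > 0`; its sum is an entire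
function, real-valued on `ℝ^d × ℝ^d` and `ℤ^d`-periodic in `θ`. -/
theorem statement13 (d : ℕ) (hd : 3 ≤ d) (ωt : Fin (d - 1) → ℝ)
    (k : ℕ → Fin (d - 1) → ℤ) (u : ℕ → ℝ)
    (hk0 : ∀ j, k j ≠ 0) (hkj : ∀ j : ℕ, (j : ℝ) ≤ ‖k j‖)
    (hu0 : ∀ j, 0 < u j) (hu : Tendsto u atTop atTop)
    (hsmall : ∀ j, |∑ i, ωt i * (k j i : ℝ)| ≤ Real.exp (-(u j * ‖k j‖))) :
    ∃ F : (Fin d → ℂ) × (Fin d → ℂ) → ℂ,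
      (∀ Δ ρ : ℝ, 0 < Δ → 0 < ρ →
        TendstoUniformlyOn
          (fun n z => ∑ j ∈ Finset.Ico 2 n, fTermL d (by omega) ωt k j z) F atTop
          {z : (Fin d → ℂ) × (Fin d → ℂ) |
            (∀ i, |(z.1 i).im| ≤ ρ) ∧ ∀ i, ‖z.2 i‖ ≤ Δ}) ∧
      Differentiable ℂ F ∧
      (∀ θ r : Fin d → ℝ, (F (fun i => (θ i : ℂ), fun i => (r i : ℂ))).im = 0) ∧
      (∀ (θ r : Fin d → ℝ) (m : Fin d → ℤ),
        F (fun i => ((θ i + (m i : ℝ) : ℝ) : ℂ), fun i => (r i : ℂ)) =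
          F (fun i => (θ i : ℂ), fun i => (r i : ℂ))) := by
  classical
  have hd' : 0 < d := by omega
  set h : ℕ → ((Fin d → ℂ) × (Fin d → ℂ)) → ℂ :=
    fun j z => if 2 ≤ j then fTermL d hd' ωt k j z else 0 with hh
  set F : ((Fin d → ℂ) × (Fin d → ℂ)) → ℂ := fun z => ∑' j, h j z with hF
  have hK1 : ∀ j, 1 ≤ ‖k j‖ := fun j => one_le_normk d k j (hk0 j)
  have hK0 : ∀ j : ℕ, (0:ℝ) ≤ ‖k j‖ := fun j => norm_nonneg _
  refine ⟨F, ?_, ?_, ?_, ?_⟩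
  · -- uniform convergence
    intro Δ ρ hΔ hρ
    have hcs : Summable (fun j => Real.exp (-(u j * ‖k j‖)) * Δ ^ j
        * Real.exp (‖k j‖ * (Δ + 2 * π * ((d - 1 : ℕ) : ℝ) * ρ)) * (1 * ‖k j‖)) :=
      aux_summable u (fun j => ‖k j‖) hK1 hkj hu Δ _ 1 hΔ.le zero_le_one
    have hb : ∀ j z, z ∈ {z : (Fin d → ℂ) × (Fin d → ℂ) |
        (∀ i, |(z.1 i).im| ≤ ρ) ∧ ∀ i, ‖z.2 i‖ ≤ Δ} →
        ‖h j z‖ ≤ Real.exp (-(u j * ‖k j‖)) * Δ ^ j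
          * Real.exp (‖k j‖ * (Δ + 2 * π * ((d - 1 : ℕ) : ℝ) * ρ)) * (1 * ‖k j‖) := by
      intro j z hz
      by_cases hj : 2 ≤ j
      · have := fTermL_norm_le d hd' ωt k u hsmall Δ ρ j z hz.1 hz.2
        simp only [hh, if_pos hj]
        refine le_trans this ?_
        rw [show ‖k j‖ * (Δ + 2 * π * ((d - 1 : ℕ) : ℝ) * ρ)
            = ‖k j‖ * Δ + 2 * π * (((d - 1 : ℕ) : ℝ) * (‖k j‖ * ρ)) from by ring, Real.exp_add]
        rw [show Real.exp (-(u j * ‖k j‖)) * Δ ^ j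
            * (Real.exp (‖k j‖ * Δ) * Real.exp (2 * π * (((d - 1 : ℕ) : ℝ) * (‖k j‖ * ρ))))
            * (1 * ‖k j‖) = Real.exp (-(u j * ‖k j‖)) * Δ ^ j * Real.exp (‖k j‖ * Δ)
            * Real.exp (2 * π * (((d - 1 : ℕ) : ℝ) * (‖k j‖ * ρ))) * ‖k j‖ from by ring]
        exact le_mul_of_one_le_right (by positivity) (hK1 j)
      · simp only [hh, if_neg hj, norm_zero]
        positivity
    have huc := tendstoUniformlyOn_tsum_nat hcs hb
    have hfam : (fun n (z : (Fin d → ℂ) × (Fin d → ℂ)) =>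
        ∑ j ∈ Finset.Ico 2 n, fTermL d hd' ωt k j z)
        = fun N z => ∑ j ∈ Finset.range N, h j z := by
      funext n z
      rw [show Finset.Ico 2 n = (Finset.range n).filter (fun j => 2 ≤ j) from by
        ext a; simp [Finset.mem_Ico, Finset.mem_filter, Finset.mem_range]; omega]
      rw [Finset.sum_filter]
    rw [show (fun n (z : (Fin d → ℂ) × (Fin d → ℂ)) =>
        ∑ j ∈ Finset.Ico 2 n, fTermL d hd' ωt k j z)
        = fun N z => ∑ j ∈ Finset.range N, h j z from hfam]
    exact huc
  · -- differentiability
    intro x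
    set R : ℝ := ‖x‖ + 1 with hRdef
    have hR1 : (1:ℝ) ≤ R := by rw [hRdef]; linarith [norm_nonneg x]
    have hR0 : (0:ℝ) < R := lt_of_lt_of_le one_pos hR1
    have hcder : Summable (fun j => Real.exp (-(u j * ‖k j‖)) * R ^ j
        * Real.exp (‖k j‖ * (R + 2 * π * ((d - 1 : ℕ) : ℝ) * R)) * ((2 * π * d + 2) * ‖k j‖)) :=
      aux_summable u (fun j => ‖k j‖) hK1 hkj hu R _ (2 * π * d + 2)
        (le_trans zero_le_one hR1) (by positivity)
    set f' : ℕ → ((Fin d → ℂ) × (Fin d → ℂ)) → ((Fin d → ℂ) × (Fin d → ℂ)) →L[ℂ] ℂ :=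
      fun n y => if 2 ≤ n then dTerm d hd' ωt k n y else 0 with hf'def
    have hf : ∀ n y, y ∈ Metric.ball (0 : (Fin d → ℂ) × (Fin d → ℂ)) R →
        HasFDerivAt (h n) (f' n y) y := by
      intro n y _
      by_cases hn : 2 ≤ n
      · have he : h n = fTermL d hd' ωt k n := by funext z; simp [hh, hn]
        rw [he, hf'def]
        simp only [if_pos hn]
        exact fTermL_hasFDerivAt d hd' ωt k n y
      · have he : h n = fun _ => 0 := by funext z; simp [hh, hn]
        rw [he, hf'def]
        simp only [if_neg hn]
        exact hasFDerivAt_const 0 y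
    have hmem : ∀ y : (Fin d → ℂ) × (Fin d → ℂ), y ∈ Metric.ball
        (0 : (Fin d → ℂ) × (Fin d → ℂ)) R →
        (∀ i, |(y.1 i).im| ≤ R) ∧ ∀ i, ‖y.2 i‖ ≤ R := by
      intro y hy
      rw [mem_ball_zero_iff] at hy
      constructor
      · intro i
        calc |(y.1 i).im| ≤ ‖y.1 i‖ := Complex.abs_im_le_norm _
          _ = ‖y.1 i‖ := rfl
          _ ≤ ‖y.1‖ := norm_le_pi_norm _ _
          _ ≤ ‖y‖ := norm_fst_le _
          _ ≤ R := hy.le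
      · intro i
        calc ‖y.2 i‖ ≤ ‖y.2‖ := norm_le_pi_norm _ _
          _ ≤ ‖y‖ := norm_snd_le _
          _ ≤ R := hy.le
    have hf' : ∀ n y, y ∈ Metric.ball (0 : (Fin d → ℂ) × (Fin d → ℂ)) R →
        ‖f' n y‖ ≤ Real.exp (-(u n * ‖k n‖)) * R ^ n
          * Real.exp (‖k n‖ * (R + 2 * π * ((d - 1 : ℕ) : ℝ) * R))
          * ((2 * π * d + 2) * ‖k n‖) := by
      intro n y hy
      obtain ⟨h1, h2⟩ := hmem y hy
      by_cases hn : 2 ≤ n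
      · rw [hf'def]; simp only [if_pos hn]
        exact dTerm_norm_le d hd' ωt k u hsmall hkj R hR1 n y h1 h2
      · rw [hf'def]; simp only [if_neg hn, norm_zero]
        positivity
    have hf0 : Summable (fun n => h n (0 : (Fin d → ℂ) × (Fin d → ℂ))) := by
      have hz : ∀ n, h n (0 : (Fin d → ℂ) × (Fin d → ℂ)) = 0 := by
        intro n
        by_cases hn : 2 ≤ n
        · simp [hh, hn, fTermL, zero_pow (show n ≠ 0 by omega)]
        · simp [hh, hn]
      simpa [hz] using summable_zero
    have hderiv := hasFDerivAt_tsum_of_isPreconnected hcder Metric.isOpen_ball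
      (convex_ball (0 : (Fin d → ℂ) × (Fin d → ℂ)) R).isPreconnected hf hf'
      (Metric.mem_ball_self hR0) hf0
      (mem_ball_zero_iff.2 (by rw [hRdef]; linarith))
    exact hderiv.differentiableAt
  · -- real on reals
    intro θ r
    set ptr : (Fin d → ℂ) × (Fin d → ℂ) := (fun i => ((θ i : ℝ) : ℂ), fun i => ((r i : ℝ) : ℂ))
      with hptr
    set g : ℕ → ℝ := fun j => if 2 ≤ j then
        (∑ i, ωt i * (k j i : ℝ)) * r ⟨d - 1, Nat.sub_lt hd' Nat.one_pos⟩ ^ j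
          * Real.exp (‖k j‖ * r ⟨d - 1, Nat.sub_lt hd' Nat.one_pos⟩)
          * Real.sin (2 * π * ∑ i, (k j i : ℝ) * θ (Fin.castLE (Nat.sub_le d 1) i))
      else 0 with hg
    have hterm : ∀ j, h j ptr = ((g j : ℝ) : ℂ) := by
      intro j
      by_cases hj : 2 ≤ j
      · simp only [hh, hg, if_pos hj]
        rw [fTermL]
        push_cast
        ring
      · simp [hh, hg, hj]
    have : F ptr = ((∑' j, g j : ℝ) : ℂ) := by
      rw [hF]
      simp only [hterm]
      rw [Complex.ofReal_tsum]
    rw [this, Complex.ofReal_im]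
  · -- periodicity
    intro θ r m
    apply tsum_congr
    intro j
    by_cases hj : 2 ≤ j
    · simp only [hh, if_pos hj]
      simp only [fTermL]
      congr 1
      set N : ℤ := ∑ i, k j i * m (Fin.castLE (Nat.sub_le d 1) i) with hN
      have hsum : (∑ i, (k j i : ℂ) *
          (((θ (Fin.castLE (Nat.sub_le d 1) i) + (m (Fin.castLE (Nat.sub_le d 1) i) : ℝ) : ℝ)) : ℂ))
          = (∑ i, (k j i : ℂ) * ((θ (Fin.castLE (Nat.sub_le d 1) i) : ℝ) : ℂ)) + (N : ℂ) := by
        rw [hN]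
        push_cast
        rw [← Finset.sum_add_distrib]
        exact Finset.sum_congr rfl fun i _ => by ring
      rw [hsum, mul_add]
      have h2 : ((2 * π : ℝ) : ℂ) * (N : ℂ) = (N : ℂ) * (2 * (π : ℂ)) := by push_cast; ring
      rw [h2, Complex.sin_add_int_mul_two_pi]
    · simp [hh, hj]
end
end
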